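/- Let Γ be a Neumaier graph with parameters (n,k,λ;a,c) that is moreover strongly regular with parameters (n,k,λ,μ). Then (k−c+1)(k−λ−1) = (n−k−1)(μ−a). -/

import Mathlib

open Finset SimpleGraph Matrix

/-- A finset `C` is a regular clique with nexus `a` in `G`: it is a clique and every
vertex outside `C` has exactly `a` neighbors in `C`. -/
def SimpleGraph.IsRegularCliqueWithNexus {V : Type*} [Fintype V] [DecidableEq V]
    (G : SimpleGraph V) [DecidableRel G.Adj] (C : Finset V) (a : ℕ) : Prop :=
  G.IsClique (C : Set V) ∧ ∀ v ∉ C, (C.filter fun u => G.Adj v u).card = a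

/-- `G` is edge-regular with parameters `(n, k, l)`: it has `n` vertices, is `k`-regular,
and any two adjacent vertices have exactly `l` common neighbors. -/
def SimpleGraph.IsEdgeRegular {V : Type*} [Fintype V] [DecidableEq V]
    (G : SimpleGraph V) [DecidableRel G.Adj] (n k l : ℕ) : Prop :=
  Fintype.card V = n ∧ G.IsRegularOfDegree k ∧
    ∀ u v : V, G.Adj u v → Fintype.card (G.commonNeighbors u v) = l

/-- `G` is a Neumaier graph with parameters `(n, k, l; a, c)`: a connected, non-complete,
edge-regular graph with parameters `(n, k, l)` containing a regular clique of size `c`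
with nexus `a ≥ 1`. -/
def SimpleGraph.IsNeumaier {V : Type*} [Fintype V] [DecidableEq V]
    (G : SimpleGraph V) [DecidableRel G.Adj] (n k l a c : ℕ) : Prop :=
  G.Connected ∧ G ≠ ⊤ ∧ G.IsEdgeRegular n k l ∧ 1 ≤ a ∧
    ∃ C : Finset V, C.card = c ∧ G.IsRegularCliqueWithNexus C a
/-- Proposition 3.7, equation (1): in a strongly regular Neumaier graph with parameters
(n,k,l,μ;a,c), (k - c + 1)(k - l - 1) = (n - k - 1)(μ - a). -/
theorem srg_neumaier_equation_one {V : Type*} [Fintype V] [DecidableEq V]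
    (G : SimpleGraph V) [DecidableRel G.Adj] (n k l μ a c : ℕ)
    (h : G.IsNeumaier n k l a c) (hsrg : G.IsSRGWith n k l μ) :
    ((k : ℤ) - c + 1) * ((k : ℤ) - l - 1) = ((n : ℤ) - k - 1) * ((μ : ℤ) - a) := by
  obtain ⟨hconn, hne, her, ha, C, hCcard, hclique, hnexus⟩ := h
  -- C is nonempty
  have hV : Nonempty V := hconn.nonempty
  obtain ⟨v0⟩ := hV
  have hCne : C.Nonempty := by
    by_contra hE
    rw [Finset.not_nonempty_iff_eq_empty] at hE
    have := hnexus v0 (by simp [hE])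
    simp [hE] at this
    omega
  obtain ⟨x, hxC⟩ := hCne
  set A : Finset V := G.neighborFinset x \ C with hA
  set B : Finset V := Finset.univ \ insert x (G.neighborFinset x) with hB
  have hwB : ∀ w ∈ B, w ≠ x ∧ ¬ G.Adj x w := by
    intro w hw
    simp only [hB, Finset.mem_sdiff, Finset.mem_insert, mem_neighborFinset] at hw
    tauto
  have hwC : ∀ w ∈ B, w ∉ C := by
    intro w hw hwC
    obtain ⟨h1, h2⟩ := hwB w hw
    exact h2 (hclique hxC hwC (Ne.symm h1))
  -- common neighbors as finset
  have hcn : ∀ u v : V, (Set.toFinset (G.commonNeighbors u v)).card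
      = Fintype.card (G.commonNeighbors u v) := fun u v => Set.toFinset_card _
  have hcnfin : ∀ u v : V, Set.toFinset (G.commonNeighbors u v)
      = G.neighborFinset u ∩ G.neighborFinset v := by
    intro u v
    ext z
    rw [Set.mem_toFinset]
    simp [SimpleGraph.commonNeighbors, adj_comm]
  -- per-element count for y ∈ A
  have hyA : ∀ y ∈ A, ((B.filter fun w => G.Adj y w).card : ℤ) = (k : ℤ) - l - 1 := by
    intro y hy
    simp only [hA, Finset.mem_sdiff, mem_neighborFinset] at hy
    obtain ⟨hadj, hyC⟩ := hy
    have hsplit := Finset.card_filter_add_card_filter_not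
      (s := G.neighborFinset y) (p := fun z => z ∈ insert x (G.neighborFinset x))
     
    have h1 : (G.neighborFinset y).filter (fun z => z ∈ insert x (G.neighborFinset x))
        = insert x (G.neighborFinset x ∩ G.neighborFinset y) := by
      ext z
      simp only [Finset.mem_filter, Finset.mem_insert, Finset.mem_inter, mem_neighborFinset]
      constructor
      · rintro ⟨h2, h3 | h3⟩
        · exact Or.inl h3
        · exact Or.inr ⟨h3, h2⟩
      · rintro (rfl | ⟨h2, h3⟩)
        · exact ⟨hadj.symm, Or.inl rfl⟩
        · exact ⟨h3, Or.inr h2⟩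
    have h2 : (G.neighborFinset y).filter (fun z => ¬ z ∈ insert x (G.neighborFinset x))
        = B.filter fun w => G.Adj y w := by
      ext z
      simp only [hB, Finset.mem_filter, Finset.mem_sdiff, Finset.mem_univ, mem_neighborFinset]
      tauto
    have h3 : (insert x (G.neighborFinset x ∩ G.neighborFinset y)).card = l + 1 := by
      rw [Finset.card_insert_of_notMem (by simp), ← hcnfin, hcn, hsrg.of_adj x y hadj]
    rw [h1, h2, h3, G.card_neighborFinset_eq_degree, hsrg.regular y] at hsplit
    have : (B.filter fun w => G.Adj y w).card + (l + 1) = k := by omega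
    push_cast [← this]
    ring
  -- per-element count for w ∈ B
  have hwB2 : ∀ w ∈ B, ((A.filter fun y => G.Adj y w).card : ℤ) = (μ : ℤ) - a := by
    intro w hw
    obtain ⟨hwx, hwadj⟩ := hwB w hw
    have hwnC := hwC w hw
    have hsplit := Finset.card_filter_add_card_filter_not
      (s := G.neighborFinset x ∩ G.neighborFinset w) (p := fun z => z ∈ C)
     
    have h1 : (G.neighborFinset x ∩ G.neighborFinset w).filter (fun z => z ∈ C)
        = C.filter fun u => G.Adj w u := by
      ext z
      simp only [Finset.mem_filter, Finset.mem_inter, mem_neighborFinset]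
      constructor
      · rintro ⟨⟨h2, h3⟩, h4⟩
        exact ⟨h4, h3⟩
      · rintro ⟨h2, h3⟩
        have hzx : z ≠ x := by rintro rfl; exact hwadj h3.symm
        exact ⟨⟨hclique hxC h2 (Ne.symm hzx), h3⟩, h2⟩
    have h2 : (G.neighborFinset x ∩ G.neighborFinset w).filter (fun z => ¬ z ∈ C)
        = A.filter fun y => G.Adj y w := by
      ext z
      simp only [hA, Finset.mem_filter, Finset.mem_sdiff, Finset.mem_inter, mem_neighborFinset]
      tauto
    have h3 : (G.neighborFinset x ∩ G.neighborFinset w).card = μ := by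
      rw [← hcnfin, hcn]
      exact hsrg.of_not_adj (Ne.symm hwx) hwadj
    rw [h1, h2, h3, hnexus w hwnC] at hsplit
    have : (A.filter fun y => G.Adj y w).card + a = μ := by omega
    push_cast [← this]
    ring
  -- cardinalities of A and B
  have hAcard : (A.card : ℤ) = (k : ℤ) - c + 1 := by
    have hsplit := Finset.card_filter_add_card_filter_not
      (s := G.neighborFinset x) (p := fun z => z ∈ C)
    have h1 : (G.neighborFinset x).filter (fun z => z ∈ C) = C.erase x := by
      ext z
      simp only [Finset.mem_filter, Finset.mem_erase, mem_neighborFinset]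
      constructor
      · rintro ⟨h2, h3⟩
        exact ⟨fun hzx => by subst hzx; exact G.loopless.irrefl z h2, h3⟩
      · rintro ⟨h2, h3⟩
        exact ⟨hclique hxC h3 (Ne.symm h2), h3⟩
    have h2 : (G.neighborFinset x).filter (fun z => ¬ z ∈ C) = A := by
      ext z; simp [hA]
    have h3 : (C.erase x).card + 1 = c := by
      rw [Finset.card_erase_add_one hxC, hCcard]
    rw [h1, h2, G.card_neighborFinset_eq_degree, hsrg.regular x] at hsplit
    have hc1 : 1 ≤ c := by omega
    have : A.card + c = k + 1 := by omega
    push_cast [show A.card = k + 1 - c by omega]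
    omega
  have hBcard : (B.card : ℤ) = (n : ℤ) - k - 1 := by
    have hsub : insert x (G.neighborFinset x) ⊆ Finset.univ := Finset.subset_univ _
    have h1 : B.card = Fintype.card V - (k + 1) := by
      rw [hB, Finset.card_sdiff_of_subset hsub, Finset.card_univ,
        Finset.card_insert_of_notMem (by simp), G.card_neighborFinset_eq_degree,
        hsrg.regular x]
    have h2 : k + 1 ≤ Fintype.card V := by
      have := Finset.card_le_card hsub
      rw [Finset.card_insert_of_notMem (by simp), G.card_neighborFinset_eq_degree,
        hsrg.regular x, Finset.card_univ] at this
      omega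
    rw [h1, hsrg.card.symm]
    push_cast [h2]
    omega
  -- double counting
  have hdc : ∑ y ∈ A, ((B.filter fun w => G.Adj y w).card : ℤ)
      = ∑ w ∈ B, ((A.filter fun y => G.Adj y w).card : ℤ) := by
    simp only [Finset.card_filter]
    push_cast
    rw [Finset.sum_comm]
  calc ((k : ℤ) - c + 1) * ((k : ℤ) - l - 1)
      = ∑ y ∈ A, ((B.filter fun w => G.Adj y w).card : ℤ) := by
        rw [Finset.sum_congr rfl hyA, Finset.sum_const, nsmul_eq_mul, hAcard]
    _ = ∑ w ∈ B, ((A.filter fun y => G.Adj y w).card : ℤ) := hdc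
    _ = ((n : ℤ) - k - 1) * ((μ : ℤ) - a) := by
        rw [Finset.sum_congr rfl hwB2, Finset.sum_const, nsmul_eq_mul, hBcard]
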